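/- Chromatic codes of vertexes are unique: assume that for all distinct unordered pairs {i,j} ≠ {u,v} of indices the perpendicular bisectors satisfy {x ∈ ℝ² : dist(x,p_i) = dist(x,p_j)} ≠ {x ∈ ℝ² : dist(x,p_u) = dist(x,p_v)}. If x and y are vertex points (each either a 2-I vertex point or a 3-I vertex point) and code(x) = code(y), then x = y. -/
import Mathlib


noncomputable section

open Metric

abbrev Pt : Type := EuclideanSpace ℝ (Fin 2)

/-- The chromatic code of a point `x` with respect to generators `p`:
`code p x i` = #{j ≠ i : dist(x,p j) > dist(x,p i)} + (1/2)·#{j ≠ i : dist(x,p j) = dist(x,p i)}. -/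
def code {n : ℕ} (p : Fin n → Pt) (x : Pt) (i : Fin n) : ℚ :=
  (Set.ncard {j : Fin n | j ≠ i ∧ dist x (p i) < dist x (p j)} : ℚ)
  + (1/2) * (Set.ncard {j : Fin n | j ≠ i ∧ dist x (p j) = dist x (p i)} : ℚ)

/-- `{i,j}` is a tie of `x`. -/
def Tie {n : ℕ} (p : Fin n → Pt) (x : Pt) (i j : Fin n) : Prop :=
  i ≠ j ∧ dist x (p i) = dist x (p j)

/-- A cell point has no ties. -/
def CellPoint {n : ℕ} (p : Fin n → Pt) (x : Pt) : Prop :=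
  ∀ i j, ¬ Tie p x i j

/-- An edge point has exactly one (unordered) tie. -/
def EdgePoint {n : ℕ} (p : Fin n → Pt) (x : Pt) : Prop :=
  ∃ i j, Tie p x i j ∧ ∀ u v, Tie p x u v → ({u, v} : Set (Fin n)) = {i, j}

/-- A 2-I vertex point has exactly two ties, forming two disjoint pairs. -/
def Vertex2I {n : ℕ} (p : Fin n → Pt) (x : Pt) : Prop :=
  ∃ i j u v : Fin n, i ≠ j ∧ i ≠ u ∧ i ≠ v ∧ j ≠ u ∧ j ≠ v ∧ u ≠ v ∧
    Tie p x i j ∧ Tie p x u v ∧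
    ∀ a b, Tie p x a b → ({a, b} : Set (Fin n)) = {i, j} ∨ ({a, b} : Set (Fin n)) = {u, v}

/-- A 3-I vertex point: its ties are exactly the three pairs contained in some
3-element subset `{i,j,k}`. -/
def Vertex3I {n : ℕ} (p : Fin n → Pt) (x : Pt) : Prop :=
  ∃ i j k : Fin n, i ≠ j ∧ i ≠ k ∧ j ≠ k ∧
    ∀ a b, Tie p x a b ↔
      (a ≠ b ∧ a ∈ ({i, j, k} : Set (Fin n)) ∧ b ∈ ({i, j, k} : Set (Fin n)))

/-- The chromatic distance between two points. -/
def chromDist {n : ℕ} (p : Fin n → Pt) (x y : Pt) : ℚ :=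
  ∑ i, |code p x i - code p y i|

/-- The spatial particle of `x`: the fiber of the chromatic code through `x`. -/
def particle {n : ℕ} (p : Fin n → Pt) (x : Pt) : Set Pt :=
  {y | code p y = code p x}

/-- The generators are in general position: every point of the plane is one of the four
particle types, and perpendicular bisectors of distinct pairs are distinct non-parallel
lines (any two of them meet in exactly one point). -/
def GeneralPosition {n : ℕ} (p : Fin n → Pt) : Prop :=
  (∀ x : Pt, CellPoint p x ∨ EdgePoint p x ∨ Vertex2I p x ∨ Vertex3I p x) ∧
  (∀ i j u v : Fin n, i ≠ j → u ≠ v → ({i, j} : Set (Fin n)) ≠ {u, v} →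
    ∃! x : Pt, dist x (p i) = dist x (p j) ∧ dist x (p u) = dist x (p v))

/-- The set `{0,1,…,n−1}` viewed inside `ℚ`. -/
def codeRange (n : ℕ) : Set ℚ := {q | ∃ m : ℕ, m < n ∧ q = m}

lemma code_lt_of_dist_lt {n : ℕ} (p : Fin n → Pt) (x : Pt) {i j : Fin n}
    (h : dist x (p i) < dist x (p j)) : code p x j < code p x i := by
  set A : Fin n → Set (Fin n) := fun i => {k | k ≠ i ∧ dist x (p i) < dist x (p k)} with hA
  set E : Fin n → Set (Fin n) := fun i => {k | k ≠ i ∧ dist x (p k) = dist x (p i)} with hE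
  have hsub : insert j (A j ∪ E j) ⊆ A i := by
    intro k hk
    rcases hk with rfl | hk
    · exact ⟨fun hh => absurd (hh ▸ h) (lt_irrefl _), h⟩
    rcases hk with hk | hk
    · exact ⟨fun hh => absurd (hh ▸ hk.2) (fun c => absurd (h.trans c) (lt_irrefl _)), h.trans hk.2⟩
    · exact ⟨fun hh => absurd (hh ▸ hk.2) (fun c => absurd (c ▸ h) (lt_irrefl _)), hk.2 ▸ h⟩
  have hjn : j ∉ A j ∪ E j := by
    rintro (⟨hj, _⟩ | ⟨hj, _⟩) <;> exact hj rfl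
  have hdisj : Disjoint (A j) (E j) := by
    rw [Set.disjoint_left]
    rintro k ⟨_, h1⟩ ⟨_, h2⟩
    exact absurd (h2 ▸ h1) (lt_irrefl _)
  have hcard : (A j).ncard + (E j).ncard + 1 ≤ (A i).ncard := by
    have h1 : (insert j (A j ∪ E j)).ncard ≤ (A i).ncard :=
      Set.ncard_le_ncard hsub (Set.toFinite _)
    rwa [Set.ncard_insert_of_notMem hjn (Set.toFinite _),
      Set.ncard_union_eq hdisj (Set.toFinite _) (Set.toFinite _)] at h1
  have hcast : ((A j).ncard : ℚ) + (E j).ncard + 1 ≤ (A i).ncard := by exact_mod_cast hcard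
  have hEi : (0:ℚ) ≤ ((E i).ncard : ℚ) := by positivity
  have hEj : (0:ℚ) ≤ ((E j).ncard : ℚ) := by positivity
  show ((A j).ncard : ℚ) + (1/2) * (E j).ncard < (A i).ncard + (1/2) * (E i).ncard
  linarith

lemma code_eq_of_dist_eq {n : ℕ} (p : Fin n → Pt) (x : Pt) {i j : Fin n}
    (h : dist x (p i) = dist x (p j)) : code p x i = code p x j := by
  have hA : {k : Fin n | k ≠ i ∧ dist x (p i) < dist x (p k)}
      = {k : Fin n | k ≠ j ∧ dist x (p j) < dist x (p k)} := by
    ext k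
    simp only [Set.mem_setOf_eq]
    constructor
    · rintro ⟨hk, hlt⟩
      refine ⟨?_, h ▸ hlt⟩
      rintro rfl; rw [← h] at hlt; exact lt_irrefl _ hlt
    · rintro ⟨hk, hlt⟩
      refine ⟨?_, h ▸ hlt⟩
      rintro rfl; rw [h] at hlt; exact lt_irrefl _ hlt
  have key : ∀ u : Fin n, dist x (p u) = dist x (p i) →
      ({k : Fin n | k ≠ u ∧ dist x (p k) = dist x (p u)}).ncard + 1
        = ({k : Fin n | dist x (p k) = dist x (p i)}).ncard := by
    intro u hu
    have : insert u {k : Fin n | k ≠ u ∧ dist x (p k) = dist x (p u)}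
        = {k : Fin n | dist x (p k) = dist x (p i)} := by
      ext k
      simp only [Set.mem_insert_iff, Set.mem_setOf_eq]
      constructor
      · rintro (rfl | ⟨_, hk⟩)
        · exact hu
        · exact hk.trans hu
      · intro hk
        by_cases hku : k = u
        · exact Or.inl hku
        · exact Or.inr ⟨hku, hk.trans hu.symm⟩
    have hnm : u ∉ {k : Fin n | k ≠ u ∧ dist x (p k) = dist x (p u)} := by
      rintro ⟨hk, _⟩; exact hk rfl
    rw [← this, Set.ncard_insert_of_notMem hnm (Set.toFinite _)]
  have h1 := key i rfl
  have h2 := key j h.symm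
  have hEeq : ({k : Fin n | k ≠ i ∧ dist x (p k) = dist x (p i)}).ncard
      = ({k : Fin n | k ≠ j ∧ dist x (p k) = dist x (p j)}).ncard := by omega
  unfold code
  rw [hA, hEeq]

lemma dist_eq_of_code_eq {n : ℕ} (p : Fin n → Pt) (x : Pt) {i j : Fin n}
    (h : code p x i = code p x j) : dist x (p i) = dist x (p j) := by
  rcases lt_trichotomy (dist x (p i)) (dist x (p j)) with hlt | he | hlt
  · exact absurd h (ne_of_gt (code_lt_of_dist_lt p x hlt))
  · exact he
  · exact absurd h (ne_of_lt (code_lt_of_dist_lt p x hlt))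

lemma bisector_unique {a b c d : Pt} (hab : a ≠ b) (hcd : c ≠ d)
    (hne : {z : Pt | dist z a = dist z b} ≠ {z : Pt | dist z c = dist z d})
    {x y : Pt} (hx1 : dist x a = dist x b) (hx2 : dist x c = dist x d)
    (hy1 : dist y a = dist y b) (hy2 : dist y c = dist y d) : x = y := by
  by_contra hxy
  set L1 := AffineSubspace.perpBisector a b with hL1
  set L2 := AffineSubspace.perpBisector c d with hL2
  have hxL1 : x ∈ L1 := (AffineSubspace.mem_perpBisector_iff_dist_eq).mpr hx1
  have hyL1 : y ∈ L1 := (AffineSubspace.mem_perpBisector_iff_dist_eq).mpr hy1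
  have hxL2 : x ∈ L2 := (AffineSubspace.mem_perpBisector_iff_dist_eq).mpr hx2
  have hyL2 : y ∈ L2 := (AffineSubspace.mem_perpBisector_iff_dist_eq).mpr hy2
  have hv : (y -ᵥ x : Pt) ≠ 0 := fun hh => hxy (vsub_eq_zero_iff_eq.mp hh).symm
  have hdim : ∀ (u v : Pt), u ≠ v →
      Module.finrank ℝ (AffineSubspace.perpBisector u v).direction = 1 := by
    intro u v huv
    rw [AffineSubspace.direction_perpBisector]
    have hne0 : (v -ᵥ u : Pt) ≠ 0 := vsub_ne_zero.mpr huv.symm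
    have h1 : Module.finrank ℝ (ℝ ∙ (v -ᵥ u : Pt)) = 1 := finrank_span_singleton hne0
    have h2 := Submodule.finrank_add_finrank_orthogonal (K := ℝ ∙ (v -ᵥ u : Pt))
    have h3 : Module.finrank ℝ Pt = 2 := by
      simp [Pt, finrank_euclideanSpace_fin]
    omega
  have hdir : ∀ (u v : Pt), u ≠ v → y -ᵥ x ∈ (AffineSubspace.perpBisector u v).direction →
      (AffineSubspace.perpBisector u v).direction = ℝ ∙ (y -ᵥ x : Pt) := by
    intro u v huv hmem
    have hle : (ℝ ∙ (y -ᵥ x : Pt)) ≤ (AffineSubspace.perpBisector u v).direction :=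
      (Submodule.span_singleton_le_iff_mem _ _).mpr hmem
    exact (Submodule.eq_of_le_of_finrank_eq hle
      (by rw [finrank_span_singleton hv, hdim u v huv])).symm
  have hm1 : (y -ᵥ x : Pt) ∈ L1.direction := AffineSubspace.vsub_mem_direction hyL1 hxL1
  have hm2 : (y -ᵥ x : Pt) ∈ L2.direction := AffineSubspace.vsub_mem_direction hyL2 hxL2
  have hLeq : L1 = L2 := by
    apply AffineSubspace.ext_of_direction_eq
    · rw [hdir a b hab hm1, hdir c d hcd hm2]
    · exact ⟨x, hxL1, hxL2⟩
  apply hne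
  have s1 : {z : Pt | dist z a = dist z b} = (L1 : Set Pt) := by
    ext z; simp [hL1, AffineSubspace.mem_perpBisector_iff_dist_eq]
  have s2 : {z : Pt | dist z c = dist z d} = (L2 : Set Pt) := by
    ext z; simp [hL2, AffineSubspace.mem_perpBisector_iff_dist_eq]
  rw [s1, s2, hLeq]

/-- chromatic codes of vertexes are unique: if perpendicular bisectors of
distinct pairs are distinct, then two vertex points (each 2-I or 3-I) with the same
chromatic code coincide. -/
theorem vertex_codes_unique {n : ℕ} (hn : 2 ≤ n) (p : Fin n → Pt)
    (hp : Function.Injective p)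
    (hbis : ∀ i j u v : Fin n, i ≠ j → u ≠ v → ({i, j} : Set (Fin n)) ≠ {u, v} →
      {z : Pt | dist z (p i) = dist z (p j)} ≠ {z : Pt | dist z (p u) = dist z (p v)})
    (x y : Pt)
    (hx : Vertex2I p x ∨ Vertex3I p x) (hy : Vertex2I p y ∨ Vertex3I p y)
    (h : code p x = code p y) : x = y := by
  have extract : ∀ z : Pt, Vertex2I p z ∨ Vertex3I p z →
      ∃ a b c d : Fin n, Tie p z a b ∧ Tie p z c d ∧
        ({a, b} : Set (Fin n)) ≠ {c, d} := by
    rintro z (⟨i, j, u, v, hij, hiu, hiv, hju, hjv, huv, t1, t2, _⟩ | ⟨i, j, k, hij, hik, hjk, ht⟩)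
    · refine ⟨i, j, u, v, t1, t2, ?_⟩
      intro he
      have hmem : i ∈ ({u, v} : Set (Fin n)) := by
        rw [← he]; simp
      simp only [Set.mem_insert_iff, Set.mem_singleton_iff] at hmem
      rcases hmem with rfl | rfl
      · exact hiu rfl
      · exact hiv rfl
    · refine ⟨i, j, i, k, (ht i j).mpr ⟨hij, by simp, by simp⟩,
        (ht i k).mpr ⟨hik, by simp, by simp⟩, ?_⟩
      intro he
      have hmem : j ∈ ({i, k} : Set (Fin n)) := by
        rw [← he]; simp
      simp only [Set.mem_insert_iff, Set.mem_singleton_iff] at hmem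
      rcases hmem with rfl | rfl
      · exact hij rfl
      · exact hjk rfl
  obtain ⟨a, b, c, d, ⟨hab, hd1⟩, ⟨hcd, hd2⟩, hpne⟩ := extract x hx
  have hy1 : dist y (p a) = dist y (p b) := by
    apply dist_eq_of_code_eq p y
    have := code_eq_of_dist_eq p x hd1
    rw [← congrFun h a, ← congrFun h b]
    exact this
  have hy2 : dist y (p c) = dist y (p d) := by
    apply dist_eq_of_code_eq p y
    have := code_eq_of_dist_eq p x hd2
    rw [← congrFun h c, ← congrFun h d]
    exact this
  exact bisector_unique (hp.ne hab) (hp.ne hcd) (hbis a b c d hab hcd hpne)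
    hd1 hd2 hy1 hy2
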